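/- arXiv:2407.04423 — 3 statements merged into one kernel-verified Lean document; each statement's English description precedes it below -/
import Mathlib

section
/- Let ρ be a matrix on ℂ^d ⊗ ℂ^d that is separable, i.e., ρ = ∑_m λ_m σ_m ⊗ τ_m with λ_m ≥ 0, ∑_m λ_m = 1, and σ_m, τ_m positive semidefinite matrices of unit trace on ℂ^d. Then the realigned matrix R(ρ), defined entrywise by R(ρ)((m,μ),(n,ν)) = ρ((m,n),(ν,μ)), satisfies ‖R(ρ)‖_Tr ≤ 1, where ‖X‖_Tr = Tr(√(Xᴴ X)) is the trace norm (the sum of the singular values of X). -/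
open Matrix Kronecker ComplexOrder

/-- The trace norm `‖X‖_Tr = Tr √(Xᴴ X)`, the sum of the singular values of `X`. -/
noncomputable def traceNorm {n : Type*} [Fintype n] [DecidableEq n]
    (X : Matrix n n ℂ) : ℝ :=
  (((Matrix.posSemidef_conjTranspose_mul_self X).1.eigenvectorUnitary : Matrix n n ℂ) *
    diagonal ((fun x : ℝ => ((√x : ℝ) : ℂ)) ∘ (Matrix.posSemidef_conjTranspose_mul_self X).1.eigenvalues) *
    (star ((Matrix.posSemidef_conjTranspose_mul_self X).1.eigenvectorUnitary : Matrix n n ℂ))).trace.re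

/-- A bipartite matrix on `ℂ^d ⊗ ℂ^d` is separable if it is a finite convex
combination of Kronecker products of positive semidefinite unit-trace matrices. -/
def Separable {d : ℕ} (ρ : Matrix (Fin d × Fin d) (Fin d × Fin d) ℂ) : Prop :=
  ∃ (n : ℕ) (lam : Fin n → ℝ) (σ : Fin n → Matrix (Fin d) (Fin d) ℂ)
    (τ : Fin n → Matrix (Fin d) (Fin d) ℂ),
    (∀ m, 0 ≤ lam m) ∧ (∑ m, lam m = 1) ∧
    (∀ m, (σ m).PosSemidef ∧ (σ m).trace = 1) ∧
    (∀ m, (τ m).PosSemidef ∧ (τ m).trace = 1) ∧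
    ρ = ∑ m, (lam m : ℂ) • (σ m ⊗ₖ τ m)

/-- The realignment of a bipartite matrix:
`R(ρ)((m,μ),(n,ν)) = ρ((m,n),(ν,μ))`. -/
def realign {d : ℕ} (ρ : Matrix (Fin d × Fin d) (Fin d × Fin d) ℂ) :
    Matrix (Fin d × Fin d) (Fin d × Fin d) ℂ :=
  Matrix.of fun p q => ρ (p.1, q.1) (q.2, p.2)

/-- Kronecker product of PSD matrices is PSD. -/
lemma posSemidef_kron {m n : Type*} [Fintype m] [Fintype n] [DecidableEq m] [DecidableEq n]
    {A : Matrix m m ℂ} {B : Matrix n n ℂ}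
    (hA : A.PosSemidef) (hB : B.PosSemidef) : (A ⊗ₖ B).PosSemidef := by
  exact hA.kronecker hB

/-- Nonnegative real scalar multiples of PSD matrices are PSD. -/
lemma posSemidef_real_smul {n : Type*} [Fintype n] {A : Matrix n n ℂ}
    (hA : A.PosSemidef) {c : ℝ} (hc : 0 ≤ c) : ((c : ℂ) • A).PosSemidef := by
  constructor
  · have h1 := hA.1
    unfold Matrix.IsHermitian at h1 ⊢
    rw [Matrix.conjTranspose_smul, h1]
    congr 1
    simp
  · exact (hA.smul (by exact_mod_cast hc : (0 : ℂ) ≤ (c : ℂ))).2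

/-- **Realignment (CCNR) criterion, necessity**: every separable bipartite state `ρ`
satisfies `‖R(ρ)‖_Tr ≤ 1`. -/
theorem separable_realign_traceNorm_le_one {d : ℕ}
    (ρ : Matrix (Fin d × Fin d) (Fin d × Fin d) ℂ)
    (hsep : Separable ρ) : traceNorm (realign ρ) ≤ 1 := by
  classical
  obtain ⟨n, lam, σ, τ, hlam, hsum, hσ, hτ, hρ⟩ := hsep
  set M : Matrix (Fin d × Fin d) (Fin d × Fin d) ℂ :=
    ∑ m, (lam m : ℂ) • (σ m ⊗ₖ (τ m)ᵀ) with hMdef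
  have hMpsd : M.PosSemidef := by
    refine Finset.sum_induction _ _ (fun a b ha hb => ha.add hb) Matrix.PosSemidef.zero ?_
    intro m _
    exact posSemidef_real_smul (posSemidef_kron (hσ m).1 (hτ m).1.transpose) (hlam m)
  -- realign ρ is M with columns permuted by the swap
  have hre : realign ρ = M.submatrix id Prod.swap := by
    ext p q
    simp only [realign, Matrix.of_apply, hρ, hMdef, Matrix.sum_apply, Matrix.smul_apply,
      Matrix.submatrix_apply, id_eq, Matrix.kroneckerMap_apply, Matrix.transpose_apply,
      Prod.fst_swap, Prod.snd_swap]
  -- hence (realign ρ)ᴴ (realign ρ) = (M*M) reindexed by the swap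
  have key : (realign ρ)ᴴ * (realign ρ) = (M * M).submatrix Prod.swap Prod.swap := by
    rw [hre]
    ext q q'
    simp only [Matrix.mul_apply, Matrix.conjTranspose_apply, Matrix.submatrix_apply, id_eq]
    refine Finset.sum_congr rfl fun p _ => ?_
    rw [hMpsd.1.apply]
  have hsub : (M.submatrix Prod.swap Prod.swap).PosSemidef := hMpsd.submatrix _
  have hsq : (M.submatrix Prod.swap Prod.swap) ^ 2 = (realign ρ)ᴴ * (realign ρ) := by
    rw [key, pow_two]
    have : (Prod.swap : Fin d × Fin d → Fin d × Fin d)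
        = ⇑(Equiv.prodComm (Fin d) (Fin d)) := rfl
    rw [this, Matrix.submatrix_mul_equiv]
  have hsqrt : (((Matrix.posSemidef_conjTranspose_mul_self (realign ρ)).1.eigenvectorUnitary :
        Matrix (Fin d × Fin d) (Fin d × Fin d) ℂ) *
      diagonal ((fun x : ℝ => ((√x : ℝ) : ℂ)) ∘
        (Matrix.posSemidef_conjTranspose_mul_self (realign ρ)).1.eigenvalues) *
      (star ((Matrix.posSemidef_conjTranspose_mul_self (realign ρ)).1.eigenvectorUnitary :
        Matrix (Fin d × Fin d) (Fin d × Fin d) ℂ)))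
      = M.submatrix Prod.swap Prod.swap := by
    have hX := Matrix.posSemidef_conjTranspose_mul_self (realign ρ)
    open scoped MatrixOrder in
    have e : CFC.sqrt ((realign ρ)ᴴ * realign ρ) = M.submatrix Prod.swap Prod.swap :=
      (CFC.sqrt_eq_iff _ _ hX.nonneg hsub.nonneg).mpr (by rw [← hsq, sq])
    open scoped MatrixOrder in
    rw [CFC.sqrt_eq_cfc, cfc_nnreal_eq_real _ _ hX.nonneg, hX.1.cfc_eq] at e
    rw [IsHermitian.cfc, Unitary.conjStarAlgAut_apply] at e
    have hf : (fun x : ℝ => ((NNReal.sqrt x.toNNReal : NNReal) : ℝ)) = Real.sqrt := by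
      funext x
      with_unfolding_all rfl
    rw [hf] at e
    exact e
  have htrM : M.trace = ∑ m, (lam m : ℂ) := by
    rw [hMdef, Matrix.trace_sum]
    refine Finset.sum_congr rfl fun m _ => ?_
    rw [Matrix.trace_smul, Matrix.trace_kronecker, Matrix.trace_transpose,
      (hσ m).2, (hτ m).2]
    simp
  have htr : (M.submatrix Prod.swap Prod.swap).trace = M.trace := by
    unfold Matrix.trace
    exact Fintype.sum_equiv (Equiv.prodComm (Fin d) (Fin d)) _ _ fun p => rfl
  have : traceNorm (realign ρ) = 1 := by
    unfold traceNorm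
    rw [hsqrt, htr, htrM]
    have h2 : (∑ m, (lam m : ℂ)) = ((∑ m, lam m : ℝ) : ℂ) := by push_cast; ring
    rw [h2, hsum]
    simp
  rw [this]
end

section
/- Let A, B be d×d complex matrices with diag(A) = diag(B), A entrywise nonnegative, B positive semidefinite, and let ρ_(A,B) = ∑_{i,j} A_{ij} |ij⟩⟨ij| + ∑_{i≠j} B_{ij} |ii⟩⟨jj| on ℂ^d ⊗ ℂ^d. Then ρ_(A,B) is PPT — i.e., its partial transpose ρ^{T_B}((i,k),(j,l)) = ρ((i,l),(j,k)) is positive semidefinite — if and only if A_{ij}·A_{ji} ≥ |B_{ij}|² for all i,j. -/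
open Matrix ComplexOrder

/-- The CLDUI state `ρ_(A,B)` on `ℂ^d ⊗ ℂ^d`: entries `A_{ij}` at positions
`((i,j),(i,j))`, `B_{ij}` at positions `((i,i),(j,j))` for `i ≠ j`, zero elsewhere. -/
def cldui {d : ℕ} (A B : Matrix (Fin d) (Fin d) ℂ) :
    Matrix (Fin d × Fin d) (Fin d × Fin d) ℂ :=
  Matrix.of fun p q =>
    if p = q then A p.1 p.2
    else if p.1 = p.2 ∧ q.1 = q.2 then B p.1 q.1 else 0

/-- The partial transpose with respect to the second subsystem:
`ρ^{T_B}((i,k),(j,l)) = ρ((i,l),(j,k))`. -/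
def partialTransposeB {d : ℕ}
    (ρ : Matrix (Fin d × Fin d) (Fin d × Fin d) ℂ) :
    Matrix (Fin d × Fin d) (Fin d × Fin d) ℂ :=
  Matrix.of fun p q => ρ (p.1, q.2) (q.1, p.2)

lemma M_apply {d : ℕ} (A B : Matrix (Fin d) (Fin d) ℂ) (p q : Fin d × Fin d) :
    partialTransposeB (cldui A B) p q =
      (if q = p then A p.1 p.2 else 0) +
      (if p.1 ≠ p.2 ∧ q = (p.2, p.1) then B p.1 p.2 else 0) := by
  obtain ⟨i, k⟩ := p
  obtain ⟨j, l⟩ := q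
  simp only [partialTransposeB, cldui, Matrix.of_apply, Prod.mk.injEq, ne_eq]
  by_cases h1 : i = j <;> by_cases h2 : k = l <;> by_cases h3 : i = l <;> by_cases h4 : j = k <;>
    subst_eqs <;> simp_all <;> simp_all [eq_comm]

lemma M_mulVec {d : ℕ} (A B : Matrix (Fin d) (Fin d) ℂ) (x : Fin d × Fin d → ℂ)
    (p : Fin d × Fin d) :
    (partialTransposeB (cldui A B) *ᵥ x) p =
      A p.1 p.2 * x p + (if p.1 = p.2 then 0 else B p.1 p.2 * x (p.2, p.1)) := by
  simp only [Matrix.mulVec, dotProduct, M_apply, add_mul, ite_mul, zero_mul,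
    Finset.sum_add_distrib, ite_and]
  rw [Finset.sum_ite_eq' Finset.univ p (fun q => A p.1 p.2 * x q)]
  by_cases h : p.1 = p.2 <;>
    simp [h, Finset.sum_ite_eq' Finset.univ (p.2, p.1) (fun q => B p.1 p.2 * x q)]

lemma M_herm {d : ℕ} (A B : Matrix (Fin d) (Fin d) ℂ)
    (hA0 : ∀ i j, 0 ≤ A i j) (hBH : B.IsHermitian) :
    (partialTransposeB (cldui A B)).IsHermitian := by
  have hAr : ∀ i j, star (A i j) = A i j := fun i j =>
    Complex.conj_eq_iff_im.2 ((Complex.nonneg_iff.1 (hA0 i j)).2.symm)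
  have hBh : ∀ i j, star (B i j) = B j i := fun i j => hBH.apply j i
  ext p q
  obtain ⟨i, k⟩ := p
  obtain ⟨j, l⟩ := q
  simp only [conjTranspose_apply, M_apply, star_add, apply_ite (star : ℂ → ℂ), star_zero]
  by_cases h1 : i = j <;> by_cases h2 : k = l <;> by_cases h3 : i = l <;> by_cases h4 : j = k <;>
    subst_eqs <;> simp [Prod.ext_iff, hAr, hBh] <;> grind

lemma form_eval {d : ℕ} (A B : Matrix (Fin d) (Fin d) ℂ) {i j : Fin d} (hij : i ≠ j) (c e : ℂ) :
    star ((Pi.single (i,j) c + Pi.single (j,i) e : Fin d × Fin d → ℂ)) ⬝ᵥ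
      (partialTransposeB (cldui A B) *ᵥ (Pi.single (i,j) c + Pi.single (j,i) e : Fin d × Fin d → ℂ)) =
      star c * (A i j * c + B i j * e) + star e * (A j i * e + B j i * c) := by
  have hne : ((i,j) : Fin d × Fin d) ≠ (j,i) := by simp [Prod.ext_iff, hij]
  have hx1 : (Pi.single (i,j) c + Pi.single (j,i) e : Fin d × Fin d → ℂ) (i,j) = c := by
    simp [Pi.single_apply, hne, hne.symm]
  have hx2 : (Pi.single (i,j) c + Pi.single (j,i) e : Fin d × Fin d → ℂ) (j,i) = e := by
    simp [Pi.single_apply, hne, hne.symm]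
  rw [star_add, ← Pi.single_star, ← Pi.single_star, add_dotProduct,
    single_dotProduct, single_dotProduct, M_mulVec, M_mulVec]
  simp only [hx1, hx2]
  simp [hij, hij.symm]

lemma fwd {d : ℕ} (A B : Matrix (Fin d) (Fin d) ℂ)
    (hdiag : ∀ i, A i i = B i i)
    (hA0 : ∀ i j, 0 ≤ A i j)
    (hB : B.PosSemidef)
    (hM : (partialTransposeB (cldui A B)).PosSemidef) :
    ∀ i j, (Complex.normSq (B i j) : ℂ) ≤ A i j * A j i := by
  intro i j
  have hAij : A i j = ((A i j).re : ℂ) :=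
    (Complex.ext rfl (by simp [(Complex.nonneg_iff.1 (hA0 i j)).2.symm]))
  have hAji : A j i = ((A j i).re : ℂ) :=
    (Complex.ext rfl (by simp [(Complex.nonneg_iff.1 (hA0 j i)).2.symm]))
  set α : ℝ := (A i j).re with hα
  set γ : ℝ := (A j i).re with hγ
  have hα0 : 0 ≤ α := (Complex.nonneg_iff.1 (hA0 i j)).1
  have hγ0 : 0 ≤ γ := (Complex.nonneg_iff.1 (hA0 j i)).1
  by_cases hij : i = j
  · subst hij
    rw [← hdiag i, hAij, Complex.normSq_ofReal]
    exact_mod_cast le_refl (α * α)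
  · set β : ℂ := B i j with hβ
    have hh := congrFun (congrFun hB.1 i) j
    simp only [conjTranspose_apply] at hh
    have hji : B j i = star β := by rw [hβ, ← hh, star_star]
    have key : ∀ c e : ℂ,
        0 ≤ (star c * ((α:ℂ) * c + β * e) + star e * ((γ:ℂ) * e + star β * c)) := by
      intro c e
      have h := hM.dotProduct_mulVec_nonneg (Pi.single (i,j) c + Pi.single (j,i) e : Fin d × Fin d → ℂ)
      rwa [form_eval A B hij c e, hAij, hAji, hji, ← hβ] at h
    rw [hAij, hAji]
    have hconj : β * star β = (Complex.normSq β : ℂ) := Complex.mul_conj β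
    rcases hα0.lt_or_eq with hαpos | hα0'
    · have h1 := key (-β) (α:ℂ)
      have he : (star (-β) * ((α:ℂ) * (-β) + β * (α:ℂ)) + star (α:ℂ) * ((γ:ℂ) * (α:ℂ) + star β * (-β)))
          = ((α * (α * γ - Complex.normSq β) : ℝ) : ℂ) := by
        simp only [star_neg, star_star, Complex.star_def, Complex.conj_ofReal]
        push_cast
        linear_combination (-(α:ℂ)) * Complex.mul_conj β
      rw [he] at h1
      have h2 : 0 ≤ α * (α * γ - Complex.normSq β) := by exact_mod_cast h1
      have h3 : Complex.normSq β ≤ α * γ := by nlinarith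
      exact_mod_cast h3
    · rcases hγ0.lt_or_eq with hγpos | hγ0'
      · have h1 := key (γ:ℂ) (-(star β))
        have he : (star (γ:ℂ) * ((α:ℂ) * (γ:ℂ) + β * (-(star β))) + star (-(star β)) * ((γ:ℂ) * (-(star β)) + star β * (γ:ℂ)))
            = ((γ * (α * γ - Complex.normSq β) : ℝ) : ℂ) := by
          simp only [star_neg, star_star, Complex.star_def, Complex.conj_ofReal]
          push_cast
          linear_combination (-(γ:ℂ)) * Complex.mul_conj β
        rw [he] at h1
        have h2 : 0 ≤ γ * (α * γ - Complex.normSq β) := by exact_mod_cast h1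
        have h3 : Complex.normSq β ≤ α * γ := by nlinarith
        exact_mod_cast h3
      · have h1 := key 1 (-(star β))
        have he : (star (1:ℂ) * ((α:ℂ) * 1 + β * (-(star β))) + star (-(star β)) * ((γ:ℂ) * (-(star β)) + star β * 1))
            = ((α + γ * Complex.normSq β - 2 * Complex.normSq β : ℝ) : ℂ) := by
          simp only [star_neg, star_star, star_one, Complex.star_def, Complex.conj_ofReal,
            Complex.conj_conj]
          push_cast
          linear_combination ((γ:ℂ) - 2) * Complex.mul_conj β
        rw [he] at h1
        have h2 : 0 ≤ α + γ * Complex.normSq β - 2 * Complex.normSq β := by exact_mod_cast h1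
        have h4 : Complex.normSq β = 0 := by nlinarith [Complex.normSq_nonneg β]
        have h3 : Complex.normSq β ≤ α * γ := by nlinarith
        exact_mod_cast h3

lemma key_real {a b : ℝ} (ha : 0 ≤ a) (hb : 0 ≤ b) {β : ℂ}
    (hab : Complex.normSq β ≤ a * b) {n m : ℝ} (hn : 0 ≤ n) (hm : 0 ≤ m) :
    ‖β‖ * (n * m) ≤ (a * n ^ 2 + b * m ^ 2) / 2 := by
  have h1 : ‖β‖ ≤ Real.sqrt a * Real.sqrt b := by
    rw [Complex.norm_def, ← Real.sqrt_mul ha]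
    exact Real.sqrt_le_sqrt hab
  nlinarith [Real.sq_sqrt ha, Real.sq_sqrt hb, Real.sqrt_nonneg a, Real.sqrt_nonneg b,
    sq_nonneg (Real.sqrt a * n - Real.sqrt b * m), mul_nonneg hn hm,
    norm_nonneg β]

lemma bwd {d : ℕ} (A B : Matrix (Fin d) (Fin d) ℂ)
    (hA0 : ∀ i j, 0 ≤ A i j)
    (hB : B.PosSemidef)
    (h : ∀ i j, (Complex.normSq (B i j) : ℂ) ≤ A i j * A j i) :
    (partialTransposeB (cldui A B)).PosSemidef := by
  set a : Fin d × Fin d → ℝ := fun p => (A p.1 p.2).re with ha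
  have hA : ∀ p : Fin d × Fin d, A p.1 p.2 = ((a p : ℝ) : ℂ) := fun p =>
    Complex.ext rfl (by simp [(Complex.nonneg_iff.1 (hA0 p.1 p.2)).2.symm])
  have ha0 : ∀ p, 0 ≤ a p := fun p => (Complex.nonneg_iff.1 (hA0 p.1 p.2)).1
  have hBh : ∀ i j, (starRingEnd ℂ) (B i j) = B j i := by
    intro i j
    have hh := congrFun (congrFun hB.1 j) i
    simp only [conjTranspose_apply] at hh
    exact hh
  refine PosSemidef.of_dotProduct_mulVec_nonneg (M_herm A B hA0 hB.1) fun x => ?_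
  set F : Fin d × Fin d → ℂ := fun p =>
    if p.1 = p.2 then 0 else star (x p) * B p.1 p.2 * x (p.2, p.1) with hF
  have hS : star x ⬝ᵥ (partialTransposeB (cldui A B) *ᵥ x)
      = ((∑ p : Fin d × Fin d, a p * Complex.normSq (x p) : ℝ) : ℂ)
        + ∑ p : Fin d × Fin d, F p := by
    push_cast
    rw [dotProduct, ← Finset.sum_add_distrib]
    apply Finset.sum_congr rfl
    intro p _
    rw [M_mulVec, Pi.star_apply, mul_add, hA p]
    congr 1
    · simp only [Complex.star_def]
      linear_combination ((a p : ℝ) : ℂ) * Complex.mul_conj (x p)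
    · by_cases hp : p.1 = p.2 <;> simp [hF, hp, mul_assoc]
  -- the cross term is self-conjugate
  have hFconj : ∀ p : Fin d × Fin d, (starRingEnd ℂ) (F p) = F (p.2, p.1) := by
    rintro ⟨i, k⟩
    by_cases hik : i = k
    · simp [hF, hik]
    · simp only [hF]
      rw [if_neg hik, if_neg (Ne.symm hik)]
      simp only [_root_.map_mul, Complex.star_def, Complex.conj_conj, hBh]
      ring
  have hT2conj : (starRingEnd ℂ) (∑ p : Fin d × Fin d, F p) = ∑ p : Fin d × Fin d, F p := by
    rw [map_sum]
    calc ∑ p : Fin d × Fin d, (starRingEnd ℂ) (F p)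
        = ∑ p : Fin d × Fin d, F (p.2, p.1) := by
          exact Finset.sum_congr rfl fun p _ => hFconj p
      _ = ∑ p : Fin d × Fin d, F p :=
          Fintype.sum_equiv (Equiv.prodComm _ _) _ _ (fun p => rfl)
  have hT2im : (∑ p : Fin d × Fin d, F p).im = 0 :=
    Complex.conj_eq_iff_im.1 hT2conj
  -- real part bound
  have hswap : ∑ p : Fin d × Fin d, a (p.2, p.1) * Complex.normSq (x (p.2, p.1))
      = ∑ p : Fin d × Fin d, a p * Complex.normSq (x p) :=
    Fintype.sum_equiv (Equiv.prodComm _ _) _ _ (fun p => rfl)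
  have hbound : ∀ p : Fin d × Fin d,
      -((a p * Complex.normSq (x p) + a (p.2, p.1) * Complex.normSq (x (p.2, p.1))) / 2)
        ≤ (F p).re := by
    intro p
    by_cases hp : p.1 = p.2
    · have h0 : (F p).re = 0 := by simp [hF, hp]
      rw [h0]
      have h1 := mul_nonneg (ha0 p) (Complex.normSq_nonneg (x p))
      have h2 := mul_nonneg (ha0 (p.2, p.1)) (Complex.normSq_nonneg (x (p.2, p.1)))
      linarith
    · have hab : Complex.normSq (B p.1 p.2) ≤ a p * a (p.2, p.1) := by
        have hh := h p.1 p.2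
        rw [hA p, show A p.2 p.1 = ((a (p.2, p.1) : ℝ) : ℂ) from hA (p.2, p.1)] at hh
        exact_mod_cast hh
      have habs0 : ‖F p‖
          = ‖B p.1 p.2‖ * (‖x p‖ * ‖x (p.2, p.1)‖) := by
        simp only [hF]
        rw [if_neg hp]
        simp only [norm_mul, Complex.star_def, Complex.norm_conj]
        ring
      have habs : ‖F p‖
          ≤ (a p * Complex.normSq (x p) + a (p.2, p.1) * Complex.normSq (x (p.2, p.1))) / 2 := by
        rw [habs0, ← Complex.sq_norm (x p), ← Complex.sq_norm (x (p.2, p.1))]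
        exact key_real (ha0 p) (ha0 (p.2, p.1)) hab (norm_nonneg _) (norm_nonneg _)
      have hre : -‖F p‖ ≤ (F p).re :=
        (abs_le.1 (Complex.abs_re_le_norm (F p))).1
      linarith
  have hre : 0 ≤ (star x ⬝ᵥ (partialTransposeB (cldui A B) *ᵥ x)).re := by
    rw [hS]
    simp only [Complex.add_re, Complex.ofReal_re]
    rw [Complex.re_sum]
    have hsum : -(∑ p : Fin d × Fin d, a p * Complex.normSq (x p))
        ≤ ∑ p : Fin d × Fin d, (F p).re := by
      calc -(∑ p : Fin d × Fin d, a p * Complex.normSq (x p))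
          = ∑ p : Fin d × Fin d,
            -((a p * Complex.normSq (x p) + a (p.2, p.1) * Complex.normSq (x (p.2, p.1))) / 2) := by
            have e2 : ∑ p : Fin d × Fin d,
                -((a p * Complex.normSq (x p) + a (p.2, p.1) * Complex.normSq (x (p.2, p.1))) / 2)
                = ∑ p : Fin d × Fin d, (-(1/2 : ℝ) * (a p * Complex.normSq (x p))
                  + -(1/2 : ℝ) * (a (p.2, p.1) * Complex.normSq (x (p.2, p.1)))) :=
              Finset.sum_congr rfl fun p _ => by ring
            rw [e2, Finset.sum_add_distrib, ← Finset.mul_sum, ← Finset.mul_sum, hswap]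
            ring
        _ ≤ _ := Finset.sum_le_sum fun p _ => hbound p
    linarith
  rw [Complex.nonneg_iff]
  refine ⟨hre, ?_⟩
  rw [hS]
  simp [hT2im]

/-- A CLDUI state `ρ_(A,B)` is PPT if and only if
`A_{ij}·A_{ji} ≥ |B_{ij}|²` for all `i, j`. -/
theorem cldui_ppt_iff {d : ℕ} (A B : Matrix (Fin d) (Fin d) ℂ)
    (hdiag : ∀ i, A i i = B i i)
    (hA0 : ∀ i j, 0 ≤ A i j)
    (hB : B.PosSemidef) :
    (partialTransposeB (cldui A B)).PosSemidef ↔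
      ∀ i j, (Complex.normSq (B i j) : ℂ) ≤ A i j * A j i := by
  exact ⟨fwd A B hdiag hA0 hB, bwd A B hA0 hB⟩
end

section
/- Let ρ_DS = ∑_{0 ≤ i ≤ j < d} p_{ij} |D_{ij}⟩⟨D_{ij}| be a diagonal symmetric state on ℂ^d ⊗ ℂ^d, with p_{ij} ≥ 0 and ∑_{i≤j} p_{ij} = 1. Then ρ_DS is separable (i.e., a finite convex combination of tensor products τ ⊗ σ of positive semidefinite unit-trace matrices) if and only if the associated d×d matrix M_d(ρ_DS), with entries M_d(ρ_DS)_{ii} = p_{ii} and M_d(ρ_DS)_{ij} = p_{ij}/2 for i ≠ j, is completely positive, i.e., M_d(ρ_DS) = B Bᵀ for some entrywise nonnegative matrix B. -/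
open Matrix Kronecker ComplexOrder

/-- The Dicke state `|D_{ij}⟩` on `ℂ^d ⊗ ℂ^d`: `|D_{ii}⟩ = |ii⟩` and
`|D_{ij}⟩ = (|ij⟩ + |ji⟩)/√2` for `i ≠ j`. -/
noncomputable def dicke {d : ℕ} (i j : Fin d) : (Fin d × Fin d) → ℂ :=
  if i = j then fun x => if x = (i, i) then 1 else 0
  else fun x => if x = (i, j) ∨ x = (j, i) then ((Real.sqrt 2)⁻¹ : ℝ) else 0

/-- The diagonal symmetric state `ρ_DS = ∑_{0 ≤ i ≤ j < d} p_{ij} |D_{ij}⟩⟨D_{ij}|`. -/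
noncomputable def rhoDS {d : ℕ} (p : Fin d → Fin d → ℝ) :
    Matrix (Fin d × Fin d) (Fin d × Fin d) ℂ :=
  ∑ i : Fin d, ∑ j : Fin d,
    if i ≤ j then (p i j : ℂ) • Matrix.vecMulVec (dicke i j) (star (dicke i j)) else 0

/-- The matrix `M_d(ρ_DS)`: diagonal entries `p_{ii}`, off-diagonal entries `p_{ij}/2`. -/
noncomputable def Mds {d : ℕ} (p : Fin d → Fin d → ℝ) : Matrix (Fin d) (Fin d) ℝ :=
  Matrix.of fun i j => if i = j then p i i else (if i ≤ j then p i j else p j i) / 2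

/-- A real matrix `M` is completely positive if `M = B Bᵀ` for some entrywise
nonnegative matrix `B`. -/
def CompletelyPositiveMatrix {d : ℕ} (M : Matrix (Fin d) (Fin d) ℝ) : Prop :=
  ∃ (k : ℕ) (B : Matrix (Fin d) (Fin k) ℝ), (∀ i j, 0 ≤ B i j) ∧ M = B * Bᵀ

lemma phase_sum (na nc : ℕ) (hna : na ≤ 2) (hnc : nc ≤ 2) :
    ∑ x : Fin 4, (Complex.I ^ (x : ℕ)) ^ na * ((starRingEnd ℂ) (Complex.I ^ (x : ℕ))) ^ nc =
      if na = nc then 4 else 0 := by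
  rw [Fin.sum_univ_four]
  simp only [show ((0 : Fin 4) : ℕ) = 0 from rfl, show ((1 : Fin 4) : ℕ) = 1 from rfl,
    show ((2 : Fin 4) : ℕ) = 2 from rfl, show ((3 : Fin 4) : ℕ) = 3 from rfl]
  interval_cases na <;> interval_cases nc <;>
    norm_num [Complex.ext_iff, pow_succ, Complex.I_sq]

lemma count_iff {d : ℕ} (a b c e : Fin d) :
    (∀ i : Fin d, ((if i = a then 1 else 0) + (if i = b then 1 else 0) : ℕ)
        = (if i = c then 1 else 0) + (if i = e then 1 else 0)) ↔
      ((a = c ∧ b = e) ∨ (a = e ∧ b = c)) := by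
  constructor
  · intro h
    have ha := h a
    have hb := h b
    have hc := h c
    have he := h e
    by_cases hab : a = b <;> by_cases hac : a = c <;> by_cases hae : a = e <;>
      by_cases hbc : b = c <;> by_cases hbe : b = e <;> by_cases hce : c = e <;>
      simp_all
  · rintro (⟨rfl, rfl⟩ | ⟨rfl, rfl⟩) i
    · rfl
    · omega

lemma phase_prod {d : ℕ} (a b c e : Fin d) (θ : Fin d → Fin 4) :
    (Complex.I ^ ((θ a : ℕ)) * Complex.I ^ ((θ b : ℕ))) *
      ((starRingEnd ℂ) (Complex.I ^ ((θ c : ℕ))) * (starRingEnd ℂ) (Complex.I ^ ((θ e : ℕ)))) =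
    ∏ i : Fin d, (Complex.I ^ ((θ i : ℕ))) ^ ((if i = a then 1 else 0) + (if i = b then 1 else 0))
      * ((starRingEnd ℂ) (Complex.I ^ ((θ i : ℕ)))) ^
          ((if i = c then 1 else 0) + (if i = e then 1 else 0)) := by
  simp only [pow_add, pow_ite, pow_one, pow_zero]
  rw [Finset.prod_mul_distrib, Finset.prod_mul_distrib, Finset.prod_mul_distrib]
  simp only [Finset.prod_ite_eq', Finset.mem_univ, if_pos]

lemma phase_total {d : ℕ} (a b c e : Fin d) :
    ∑ θ : Fin d → Fin 4,
      (Complex.I ^ ((θ a : ℕ)) * Complex.I ^ ((θ b : ℕ))) *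
        ((starRingEnd ℂ) (Complex.I ^ ((θ c : ℕ))) * (starRingEnd ℂ) (Complex.I ^ ((θ e : ℕ))))
      = if (a = c ∧ b = e) ∨ (a = e ∧ b = c) then ((4 : ℂ) ^ d) else 0 := by
  simp only [phase_prod a b c e]
  rw [← Fintype.piFinset_univ, ← Finset.prod_univ_sum
    (fun _ : Fin d => (Finset.univ : Finset (Fin 4)))
    (fun i v => (Complex.I ^ ((v : ℕ))) ^ ((if i = a then 1 else 0) + (if i = b then 1 else 0))
      * ((starRingEnd ℂ) (Complex.I ^ ((v : ℕ)))) ^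
          ((if i = c then 1 else 0) + (if i = e then 1 else 0)))]
  have hcong : ∀ i : Fin d, (∑ x : Fin 4,
      (Complex.I ^ ((x : ℕ))) ^ ((if i = a then 1 else 0) + (if i = b then 1 else 0))
      * ((starRingEnd ℂ) (Complex.I ^ ((x : ℕ)))) ^
          ((if i = c then 1 else 0) + (if i = e then 1 else 0))) =
      if ((if i = a then 1 else 0) + (if i = b then 1 else 0) : ℕ)
          = ((if i = c then 1 else 0) + (if i = e then 1 else 0)) then 4 else 0 := by
    intro i
    exact phase_sum _ _ (by split_ifs <;> norm_num) (by split_ifs <;> norm_num)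
  rw [Finset.prod_congr rfl fun i _ => hcong i]
  by_cases hall : ∀ i : Fin d, ((if i = a then 1 else 0) + (if i = b then 1 else 0) : ℕ)
      = ((if i = c then 1 else 0) + (if i = e then 1 else 0))
  · rw [if_pos ((count_iff a b c e).mp hall)]
    rw [Finset.prod_congr rfl fun i _ => if_pos (hall i), Finset.prod_const]
    simp
  · rw [if_neg (fun h => hall ((count_iff a b c e).mpr h))]
    push_neg at hall
    obtain ⟨i, hi⟩ := hall
    exact Finset.prod_eq_zero (Finset.mem_univ i) (if_neg hi)

lemma star_dicke {d : ℕ} (i j : Fin d) (x : Fin d × Fin d) :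
    star (dicke i j x) = dicke i j x := by
  unfold dicke; split_ifs <;> simp_all <;> split_ifs <;> simp

lemma dicke_mul {d : ℕ} {i j : Fin d} (x y : Fin d × Fin d) :
    dicke i j x * dicke i j y =
      if (x = (i, j) ∨ x = (j, i)) ∧ (y = (i, j) ∨ y = (j, i)) then
        (if i = j then 1 else (2 : ℂ)⁻¹) else 0 := by
  unfold dicke
  by_cases hij : i = j
  · subst hij
    simp only [if_pos rfl, or_self]
    split_ifs with h1 h2 h3 <;> simp_all
    tauto
  · simp only [if_neg hij]
    split_ifs with h1 h2 h3 <;> simp_all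
    rw [← Complex.ofReal_inv, ← Complex.ofReal_mul, ← mul_inv,
      Real.mul_self_sqrt (by norm_num)]
    norm_num

lemma rhoDS_apply {d : ℕ} (p : Fin d → Fin d → ℝ) (a b c e : Fin d) :
    rhoDS p (a, b) (c, e) =
      if (a = c ∧ b = e) ∨ (a = e ∧ b = c) then ((Mds p a b : ℝ) : ℂ) else 0 := by
  have key : ∀ i j : Fin d,
      (if i ≤ j then (p i j : ℂ) • Matrix.vecMulVec (dicke i j) (star (dicke i j)) else 0)
        (a, b) (c, e) =
      if i = a ⊓ b ∧ j = a ⊔ b then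
        (if (a = c ∧ b = e) ∨ (a = e ∧ b = c) then ((Mds p a b : ℝ) : ℂ) else 0) else 0 := by
    intro i j
    by_cases hle : i ≤ j
    · rw [if_pos hle, Matrix.smul_apply, Matrix.vecMulVec_apply, Pi.star_apply,
        star_dicke, dicke_mul]
      by_cases h1 : ((a, b) = (i, j) ∨ (a, b) = (j, i))
      · by_cases h2 : ((c, e) = (i, j) ∨ (c, e) = (j, i))
        · -- main nonzero case
          have hij : i = a ⊓ b ∧ j = a ⊔ b := by
            rcases h1 with h | h <;> rw [Prod.ext_iff] at h <;>
              obtain ⟨rfl, rfl⟩ := h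
            · exact ⟨(inf_eq_left.2 hle).symm, (sup_eq_right.2 hle).symm⟩
            · exact ⟨(inf_eq_right.2 hle).symm, (sup_eq_left.2 hle).symm⟩
          have hpair : (a = c ∧ b = e) ∨ (a = e ∧ b = c) := by
            rcases h1 with h | h <;> rcases h2 with h' | h' <;>
              rw [Prod.ext_iff] at h h' <;> obtain ⟨rfl, rfl⟩ := h <;>
              simp_all [Prod.ext_iff] <;> tauto
          rw [if_pos ⟨h1, h2⟩, if_pos hij, if_pos hpair]
          -- value computation
          obtain ⟨rfl, rfl⟩ := hij
          rcases le_total a b with hab | hab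
          · rw [inf_eq_left.2 hab, sup_eq_right.2 hab]
            by_cases h : a = b
            · subst h; simp [Mds]
            · rw [if_neg h, Mds]
              simp only [Matrix.of_apply, if_neg h, if_pos hab, smul_eq_mul]
              push_cast
              ring
          · rw [inf_eq_right.2 hab, sup_eq_left.2 hab]
            by_cases h : b = a
            · subst h; simp [Mds]
            · rw [if_neg h, Mds]
              have h' : ¬ a = b := fun hh => h hh.symm
              have h'' : ¬ a ≤ b := by
                rcases lt_or_eq_of_le hab with h3 | h3
                · exact not_le_of_gt h3
                · exact absurd h3 h
              simp only [Matrix.of_apply, if_neg h', if_neg h'', smul_eq_mul]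
              push_cast
              ring
        · rw [if_neg (fun hh => h2 hh.2), smul_zero]
          by_cases hij : i = a ⊓ b ∧ j = a ⊔ b
          · rw [if_pos hij, if_neg]
            rintro (⟨rfl, rfl⟩ | ⟨rfl, rfl⟩)
            · exact h2 h1
            · refine h2 ?_
              rcases h1 with h | h <;> rw [Prod.ext_iff] at h <;>
                obtain ⟨rfl, rfl⟩ := h <;> simp
          · rw [if_neg hij]
      · rw [if_neg (fun hh => h1 hh.1), smul_zero, if_neg]
        rintro ⟨rfl, rfl⟩
        rcases le_total a b with hab | hab
        · exact h1 (Or.inl (by rw [inf_eq_left.2 hab, sup_eq_right.2 hab]))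
        · exact h1 (Or.inr (by rw [inf_eq_right.2 hab, sup_eq_left.2 hab]))
    · rw [if_neg hle, if_neg (by rintro ⟨rfl, rfl⟩; exact hle inf_le_sup),
        Matrix.zero_apply]
  rw [rhoDS]
  rw [Matrix.sum_apply]
  simp only [Matrix.sum_apply]
  rw [Finset.sum_congr rfl (fun i _ => Finset.sum_congr rfl (fun j _ => key i j))]
  simp [ite_and, Finset.sum_ite_eq']

lemma Mds_symm {d : ℕ} (p : Fin d → Fin d → ℝ) (a b : Fin d) : Mds p a b = Mds p b a := by
  unfold Mds
  simp only [Matrix.of_apply]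
  rcases eq_or_ne a b with rfl | h
  · rfl
  · rw [if_neg h, if_neg (Ne.symm h)]
    rcases le_total a b with hab | hab
    · rw [if_pos hab, if_neg (fun hh => h (le_antisymm hab hh))]
    · rw [if_pos hab, if_neg (fun hh => h (le_antisymm hh hab))]

theorem forward_dir {d : ℕ} (p : Fin d → Fin d → ℝ)
    (n : ℕ) (lam : Fin n → ℝ) (σ τ : Fin n → Matrix (Fin d) (Fin d) ℂ)
    (h0 : ∀ m, 0 ≤ lam m)
    (hσ : ∀ m, (σ m).PosSemidef ∧ (σ m).trace = 1)
    (hτ : ∀ m, (τ m).PosSemidef ∧ (τ m).trace = 1)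
    (hρ : ∀ a b c e : Fin d,
      (if (a = c ∧ b = e) ∨ (a = e ∧ b = c) then ((Mds p a b : ℝ) : ℂ) else 0) =
        ∑ m, (lam m : ℂ) * (σ m a c * τ m b e)) :
    ∃ (k : ℕ) (B : Matrix (Fin d) (Fin k) ℝ), (∀ i j, 0 ≤ B i j) ∧ Mds p = B * Bᵀ := by
  have hA : ∀ m, ∃ A : Matrix (Fin d) (Fin d) ℂ, σ m = Aᴴ * A :=
    fun m => by
      open scoped MatrixOrder in
      obtain ⟨B, hB⟩ := CStarAlgebra.nonneg_iff_eq_star_mul_self.mp (hσ m).1.nonneg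
      exact ⟨B, hB⟩
  have hC : ∀ m, ∃ C : Matrix (Fin d) (Fin d) ℂ, τ m = Cᴴ * C :=
    fun m => by
      open scoped MatrixOrder in
      obtain ⟨B, hB⟩ := CStarAlgebra.nonneg_iff_eq_star_mul_self.mp (hτ m).1.nonneg
      exact ⟨B, hB⟩
  choose A hA using hA
  choose C hC using hC
  have hexp : ∀ a b c e : Fin d,
      (if (a = c ∧ b = e) ∨ (a = e ∧ b = c) then ((Mds p a b : ℝ) : ℂ) else 0) =
        ∑ t : Fin n × Fin d × Fin d, (lam t.1 : ℂ) *
          ((starRingEnd ℂ) (A t.1 t.2.1 a) * A t.1 t.2.1 c) *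
          ((starRingEnd ℂ) (C t.1 t.2.2 b) * C t.1 t.2.2 e) := by
    intro a b c e
    rw [hρ a b c e, Fintype.sum_prod_type]
    refine Finset.sum_congr rfl fun m _ => ?_
    have hst : σ m a c * τ m b e = ∑ r : Fin d, ∑ s : Fin d,
        ((starRingEnd ℂ) (A m r a) * A m r c) * ((starRingEnd ℂ) (C m s b) * C m s e) := by
      rw [hA m, hC m, Matrix.mul_apply, Matrix.mul_apply, Finset.sum_mul_sum]
      simp only [Matrix.conjTranspose_apply, RCLike.star_def]
    rw [hst]
    simp only [Finset.mul_sum]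
    rw [Fintype.sum_prod_type]
    exact Finset.sum_congr rfl fun r _ => Finset.sum_congr rfl fun s _ => by ring
  set T := Fin n × Fin d × Fin d with hT
  let Q : Fin d → T → ℝ := fun a t => ‖A t.1 t.2.1 a‖ * ‖C t.1 t.2.2 a‖
  let R : Fin d → Fin d → T → ℝ := fun a b t =>
    lam t.1 * ‖A t.1 t.2.1 a‖ ^ 2 * ‖C t.1 t.2.2 b‖ ^ 2
  have key : ∀ a b : Fin d, Mds p a b = ∑ t : T, (lam t.1 * Q a t) * Q b t := by
    have h2 : ∀ a b : Fin d, Mds p a b = ∑ t : T, R a b t := by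
      intro a b
      have h := hexp a b a b
      rw [if_pos (Or.inl ⟨rfl, rfl⟩)] at h
      have h' : ((Mds p a b : ℝ) : ℂ) = ((∑ t : T, R a b t : ℝ) : ℂ) := by
        rw [h, Complex.ofReal_sum]
        refine Finset.sum_congr rfl fun t _ => ?_
        rw [mul_comm ((starRingEnd ℂ) (A t.1 t.2.1 a)) (A t.1 t.2.1 a),
          mul_comm ((starRingEnd ℂ) (C t.1 t.2.2 b)) (C t.1 t.2.2 b),
          Complex.mul_conj, Complex.mul_conj]
        simp only [R, Complex.normSq_eq_norm_sq]
        push_cast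
        ring
      exact_mod_cast h'
    intro a b
    have h3 : Mds p a b = ∑ t : T, R b a t := by rw [Mds_symm]; exact h2 b a
    have h1 : Mds p a b ≤ ∑ t : T, (lam t.1 * Q a t) * Q b t := by
      have h := hexp a b b a
      rw [if_pos (Or.inr ⟨rfl, rfl⟩)] at h
      have hre : Mds p a b = (∑ t : T, (lam t.1 : ℂ) *
          ((starRingEnd ℂ) (A t.1 t.2.1 a) * A t.1 t.2.1 b) *
          ((starRingEnd ℂ) (C t.1 t.2.2 b) * C t.1 t.2.2 a)).re := by
        rw [← h, Complex.ofReal_re]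
      rw [hre, Complex.re_sum]
      refine Finset.sum_le_sum fun t _ => ?_
      calc (↑(lam t.1) * ((starRingEnd ℂ) (A t.1 t.2.1 a) * A t.1 t.2.1 b) *
          ((starRingEnd ℂ) (C t.1 t.2.2 b) * C t.1 t.2.2 a)).re
          ≤ ‖(↑(lam t.1) * ((starRingEnd ℂ) (A t.1 t.2.1 a) * A t.1 t.2.1 b) *
          ((starRingEnd ℂ) (C t.1 t.2.2 b) * C t.1 t.2.2 a))‖ := Complex.re_le_norm _
        _ = (lam t.1 * Q a t) * Q b t := by
            simp only [norm_mul, Complex.norm_real, Real.norm_eq_abs, Complex.norm_conj,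
              abs_of_nonneg (h0 t.1), Q]
            ring
    have h4 : ∑ t : T, (lam t.1 * Q a t) * Q b t ≤ Mds p a b := by
      have hsplit : ∑ t : T, (R a b t + R b a t) / 2 = Mds p a b := by
        rw [← Finset.sum_div, Finset.sum_add_distrib, ← h2 a b, ← h3]
        ring
      rw [← hsplit]
      refine Finset.sum_le_sum ?_
      rintro ⟨m, r, s⟩ -
      simp only [Q, R]
      nlinarith [mul_nonneg (h0 m) (sq_nonneg (‖A m r a‖ * ‖C m s b‖
        - ‖A m r b‖ * ‖C m s a‖))]
    exact le_antisymm h1 h4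
  have key' : ∀ a b : Fin d, Mds p a b = ∑ t : T,
      (Real.sqrt (lam t.1) * Q a t) * (Real.sqrt (lam t.1) * Q b t) := by
    intro a b
    rw [key a b]
    refine Finset.sum_congr rfl fun t _ => ?_
    have hs : Real.sqrt (lam t.1) * Real.sqrt (lam t.1) = lam t.1 :=
      Real.mul_self_sqrt (h0 t.1)
    linear_combination (-(Q a t * Q b t)) * hs
  refine ⟨Fintype.card T, Matrix.of (fun a j => Real.sqrt (lam ((Fintype.equivFin T).symm j).1)
    * Q a ((Fintype.equivFin T).symm j)), fun i j => ?_, ?_⟩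
  · exact mul_nonneg (Real.sqrt_nonneg _)
      (mul_nonneg (norm_nonneg _) (norm_nonneg _))
  · ext a b
    rw [Matrix.mul_apply]
    simp only [Matrix.transpose_apply, Matrix.of_apply]
    rw [key' a b, ← Equiv.sum_comp (Fintype.equivFin T).symm
      (fun t => (Real.sqrt (lam t.1) * Q a t) * (Real.sqrt (lam t.1) * Q b t))]

lemma posSemidef_vmv {d : ℕ} (v : Fin d → ℂ) : (Matrix.vecMulVec v (star v)).PosSemidef := by
  rw [Matrix.vecMulVec_eq Unit, show Matrix.replicateRow Unit (star v) = (Matrix.replicateCol Unit v)ᴴ by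
    ext i j; simp [Matrix.replicateRow, Matrix.replicateCol]]
  exact Matrix.posSemidef_self_mul_conjTranspose _

lemma trace_vmv {d : ℕ} (v : Fin d → ℂ) :
    (Matrix.vecMulVec v (star v)).trace = ∑ i, v i * (starRingEnd ℂ) (v i) := by
  simp [Matrix.trace, Matrix.vecMulVec_apply, Matrix.diag, RCLike.star_def]

noncomputable def wvec {d k : ℕ} (hd : 0 < d) (B : Matrix (Fin d) (Fin k) ℝ)
    (m : Fin k) (θ : Fin d → Fin 4) : Fin d → ℂ := fun i =>
  if (∑ i', B i' m) = 0 then (if i = ⟨0, hd⟩ then 1 else 0)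
  else (((Real.sqrt (∑ i', B i' m))⁻¹ : ℝ) : ℂ) *
    (((Real.sqrt (B i m) : ℝ) : ℂ) * Complex.I ^ ((θ i : ℕ)))

section rev
variable {d k : ℕ} (hd : 0 < d) (B : Matrix (Fin d) (Fin k) ℝ)

lemma wvec_trace (hB0 : ∀ i j, 0 ≤ B i j) (m : Fin k) (θ : Fin d → Fin 4) :
    (Matrix.vecMulVec (wvec hd B m θ) (star (wvec hd B m θ))).trace = 1 := by
  rw [trace_vmv]
  by_cases hsm : (∑ i', B i' m) = 0
  · simp only [wvec, if_pos hsm]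
    simp [apply_ite, Finset.sum_ite_eq']
  · have hs0 : 0 ≤ ∑ i', B i' m := Finset.sum_nonneg fun i _ => hB0 i m
    have key : ∀ i, wvec hd B m θ i * (starRingEnd ℂ) (wvec hd B m θ i) =
        (((∑ i', B i' m)⁻¹ * B i m : ℝ) : ℂ) := by
      intro i
      simp only [wvec, if_neg hsm, _root_.map_mul, Complex.conj_ofReal]
      rw [show (((Real.sqrt (∑ i', B i' m))⁻¹ : ℝ) : ℂ) *
          (((Real.sqrt (B i m) : ℝ) : ℂ) * Complex.I ^ ((θ i : ℕ))) *
          ((((Real.sqrt (∑ i', B i' m))⁻¹ : ℝ) : ℂ) *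
          (((Real.sqrt (B i m) : ℝ) : ℂ) * (starRingEnd ℂ) (Complex.I ^ ((θ i : ℕ))))) =
          ((((Real.sqrt (∑ i', B i' m))⁻¹ : ℝ) : ℂ) * (((Real.sqrt (∑ i', B i' m))⁻¹ : ℝ) : ℂ)) *
          ((((Real.sqrt (B i m) : ℝ) : ℂ) * ((Real.sqrt (B i m) : ℝ) : ℂ)) *
          (Complex.I ^ ((θ i : ℕ)) * (starRingEnd ℂ) (Complex.I ^ ((θ i : ℕ))))) from by ring]
      rw [Complex.mul_conj]
      have habs : Complex.normSq (Complex.I ^ ((θ i : ℕ))) = 1 := by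
        rw [Complex.normSq_eq_norm_sq, norm_pow, Complex.norm_I, one_pow, one_pow]
      rw [habs, ← Complex.ofReal_mul, ← Complex.ofReal_mul, ← mul_inv,
        Real.mul_self_sqrt hs0, Real.mul_self_sqrt (hB0 i m)]
      push_cast
      ring
    rw [Finset.sum_congr rfl fun i _ => key i, ← Complex.ofReal_sum, ← Finset.mul_sum,
      inv_mul_cancel₀ hsm, Complex.ofReal_one]

lemma coef_helper (x : ℝ) (hx : 0 ≤ x) (hne : x ≠ 0) :
    ((((Real.sqrt x)⁻¹ : ℝ) : ℂ)) ^ 4 * ((x ^ 2 : ℝ) : ℂ) = 1 := by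
  rw [← Complex.ofReal_pow, ← Complex.ofReal_mul]
  norm_cast
  rw [inv_pow, show Real.sqrt x ^ 4 = (Real.sqrt x ^ 2) ^ 2 by ring, Real.sq_sqrt hx]
  field_simp

lemma wvec_sum (hB0 : ∀ i j, 0 ≤ B i j) (a b c e : Fin d) (m : Fin k) :
    ∑ θ : Fin d → Fin 4, (((∑ i', B i' m) ^ 2 / 4 ^ d : ℝ) : ℂ) *
      ((wvec hd B m θ a * (starRingEnd ℂ) (wvec hd B m θ c)) *
       (wvec hd B m θ b * (starRingEnd ℂ) (wvec hd B m θ e)))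
    = if (a = c ∧ b = e) ∨ (a = e ∧ b = c) then ((B a m * B b m : ℝ) : ℂ) else 0 := by
  by_cases hsm : (∑ i', B i' m) = 0
  · have hall : ∀ i, B i m = 0 := by
      intro i
      have := (Finset.sum_eq_zero_iff_of_nonneg (fun i _ => hB0 i m)).mp hsm
      exact this i (Finset.mem_univ i)
    simp [hsm, hall]
  · have hs0 : 0 ≤ ∑ i', B i' m := Finset.sum_nonneg fun i _ => hB0 i m
    have hterm : ∀ θ : Fin d → Fin 4,
        (((∑ i', B i' m) ^ 2 / 4 ^ d : ℝ) : ℂ) *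
        ((wvec hd B m θ a * (starRingEnd ℂ) (wvec hd B m θ c)) *
         (wvec hd B m θ b * (starRingEnd ℂ) (wvec hd B m θ e))) =
        (((Real.sqrt (B a m) * Real.sqrt (B b m) * Real.sqrt (B c m) * Real.sqrt (B e m))
            / 4 ^ d : ℝ) : ℂ) *
          ((Complex.I ^ ((θ a : ℕ)) * Complex.I ^ ((θ b : ℕ))) *
            ((starRingEnd ℂ) (Complex.I ^ ((θ c : ℕ))) *
             (starRingEnd ℂ) (Complex.I ^ ((θ e : ℕ))))) := by
      intro θ
      simp only [wvec, if_neg hsm, _root_.map_mul, Complex.conj_ofReal]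
      rw [show (((∑ i', B i' m) ^ 2 / 4 ^ d : ℝ) : ℂ) *
          ((((Real.sqrt (∑ i', B i' m))⁻¹ : ℝ) : ℂ) *
            (((Real.sqrt (B a m) : ℝ) : ℂ) * Complex.I ^ ((θ a : ℕ))) *
          ((((Real.sqrt (∑ i', B i' m))⁻¹ : ℝ) : ℂ) *
            (((Real.sqrt (B c m) : ℝ) : ℂ) * (starRingEnd ℂ) (Complex.I ^ ((θ c : ℕ))))) *
          ((((Real.sqrt (∑ i', B i' m))⁻¹ : ℝ) : ℂ) *
            (((Real.sqrt (B b m) : ℝ) : ℂ) * Complex.I ^ ((θ b : ℕ))) *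
          ((((Real.sqrt (∑ i', B i' m))⁻¹ : ℝ) : ℂ) *
            (((Real.sqrt (B e m) : ℝ) : ℂ) * (starRingEnd ℂ) (Complex.I ^ ((θ e : ℕ))))))) =
          (((((Real.sqrt (∑ i', B i' m))⁻¹ : ℝ) : ℂ)) ^ 4 * (((∑ i', B i' m) ^ 2 : ℝ) : ℂ)) *
          ((((Real.sqrt (B a m) * Real.sqrt (B b m) * Real.sqrt (B c m) * Real.sqrt (B e m))
              / 4 ^ d : ℝ) : ℂ) *
            ((Complex.I ^ ((θ a : ℕ)) * Complex.I ^ ((θ b : ℕ))) *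
              ((starRingEnd ℂ) (Complex.I ^ ((θ c : ℕ))) *
               (starRingEnd ℂ) (Complex.I ^ ((θ e : ℕ)))))) from by push_cast; ring,
        coef_helper _ hs0 hsm, one_mul]
    rw [Finset.sum_congr rfl fun θ _ => hterm θ, ← Finset.mul_sum, phase_total,
      mul_ite, mul_zero]
    split_ifs with hpair
    · rw [show ((4 : ℂ) ^ d) = ((4 ^ d : ℝ) : ℂ) from by push_cast; ring,
        ← Complex.ofReal_mul, Complex.ofReal_inj]
      rw [div_mul_cancel₀ _ (by positivity : (4 : ℝ) ^ d ≠ 0)]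
      rcases hpair with ⟨rfl, rfl⟩ | ⟨rfl, rfl⟩
      · rw [show Real.sqrt (B a m) * Real.sqrt (B b m) * Real.sqrt (B a m) * Real.sqrt (B b m)
            = (Real.sqrt (B a m) * Real.sqrt (B a m)) * (Real.sqrt (B b m) * Real.sqrt (B b m))
            from by ring, Real.mul_self_sqrt (hB0 a m), Real.mul_self_sqrt (hB0 b m)]
      · rw [show Real.sqrt (B a m) * Real.sqrt (B b m) * Real.sqrt (B b m) * Real.sqrt (B a m)
            = (Real.sqrt (B a m) * Real.sqrt (B a m)) * (Real.sqrt (B b m) * Real.sqrt (B b m))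
            from by ring, Real.mul_self_sqrt (hB0 a m), Real.mul_self_sqrt (hB0 b m)]
    · rfl
end rev


lemma Mds_sum_eq {d : ℕ} (p : Fin d → Fin d → ℝ) :
    ∑ i : Fin d, ∑ j : Fin d, Mds p i j
      = ∑ i : Fin d, ∑ j : Fin d, (if i ≤ j then p i j else 0) := by
  have key : ∀ i j : Fin d, Mds p i j =
      ((if i ≤ j then p i j else 0) + (if j ≤ i then p j i else 0)) / 2 := by
    intro i j
    unfold Mds
    simp only [Matrix.of_apply]
    rcases eq_or_ne i j with rfl | hne
    · simp
    · rw [if_neg hne]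
      rcases le_total i j with h | h
      · rw [if_pos h, if_pos h, if_neg (fun hh => hne (le_antisymm h hh)), add_zero]
      · rw [if_neg (fun hh => hne (le_antisymm hh h)), if_neg (fun hh => hne (le_antisymm hh h)),
          if_pos h, zero_add]
  simp only [key]
  have hhalf : ∀ (α : Type) (s : Finset α) (f g : α → ℝ),
      ∑ i ∈ s, (f i + g i) / 2 = ((∑ i ∈ s, f i) + ∑ i ∈ s, g i) / 2 := by
    intro α s f g
    rw [← Finset.sum_add_distrib, Finset.sum_div]
  calc ∑ i : Fin d, ∑ j : Fin d,
        ((if i ≤ j then p i j else 0) + (if j ≤ i then p j i else 0)) / 2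
      = ∑ i : Fin d, ((∑ j : Fin d, (if i ≤ j then p i j else 0))
          + ∑ j : Fin d, (if j ≤ i then p j i else 0)) / 2 :=
        Finset.sum_congr rfl fun i _ => hhalf _ _ _ _
    _ = ((∑ i : Fin d, ∑ j : Fin d, (if i ≤ j then p i j else 0))
          + ∑ i : Fin d, ∑ j : Fin d, (if j ≤ i then p j i else 0)) / 2 := hhalf _ _ _ _
    _ = ∑ i : Fin d, ∑ j : Fin d, (if i ≤ j then p i j else 0) := by
        rw [show ∑ i : Fin d, ∑ j : Fin d, (if j ≤ i then p j i else 0)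
          = ∑ i : Fin d, ∑ j : Fin d, (if i ≤ j then p i j else 0) from Finset.sum_comm]
        ring

theorem reverse_dir {d : ℕ} (hd : 0 < d) (p : Fin d → Fin d → ℝ)
    (hMsum : ∑ i : Fin d, ∑ j : Fin d, Mds p i j = 1)
    (k : ℕ) (B : Matrix (Fin d) (Fin k) ℝ) (hB0 : ∀ i j, 0 ≤ B i j)
    (hM : Mds p = B * Bᵀ) : Separable (rhoDS p) := by
  set T := Fin k × (Fin d → Fin 4) with hT
  set E := Fintype.equivFin T with hE
  refine ⟨Fintype.card T,
    fun m' => ((∑ i', B i' (E.symm m').1) ^ 2 / 4 ^ d : ℝ),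
    fun m' => Matrix.vecMulVec (wvec hd B (E.symm m').1 (E.symm m').2)
      (star (wvec hd B (E.symm m').1 (E.symm m').2)),
    fun m' => Matrix.vecMulVec (wvec hd B (E.symm m').1 (E.symm m').2)
      (star (wvec hd B (E.symm m').1 (E.symm m').2)),
    fun m' => by positivity, ?_,
    fun m' => ⟨posSemidef_vmv _, wvec_trace hd B hB0 _ _⟩,
    fun m' => ⟨posSemidef_vmv _, wvec_trace hd B hB0 _ _⟩, ?_⟩
  · -- sum of weights is 1
    rw [Equiv.sum_comp E.symm (fun t : T => ((∑ i', B i' t.1) ^ 2 / 4 ^ d : ℝ)),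
      Fintype.sum_prod_type]
    have hinner : ∀ m : Fin k,
        (∑ _θ : Fin d → Fin 4, ((∑ i', B i' m) ^ 2 / 4 ^ d : ℝ)) = (∑ i', B i' m) ^ 2 := by
      intro m
      rw [Finset.sum_const, Finset.card_univ, Fintype.card_fun]
      simp only [Fintype.card_fin, nsmul_eq_mul]
      push_cast
      field_simp
    rw [Finset.sum_congr rfl fun m _ => hinner m]
    have hsq : ∀ m : Fin k, (∑ i', B i' m) ^ 2 = ∑ i : Fin d, ∑ j : Fin d, B i m * B j m := by
      intro m
      rw [sq, Finset.sum_mul_sum]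
    rw [Finset.sum_congr rfl fun m _ => hsq m]
    rw [Finset.sum_comm]
    rw [Finset.sum_congr rfl fun i (_ : i ∈ Finset.univ) =>
      (Finset.sum_comm : ∑ m : Fin k, ∑ j : Fin d, B i m * B j m
        = ∑ j : Fin d, ∑ m : Fin k, B i m * B j m)]
    have : ∀ i j : Fin d, ∑ m : Fin k, B i m * B j m = Mds p i j := by
      intro i j
      rw [hM, Matrix.mul_apply]
      simp [Matrix.transpose_apply]
    rw [Finset.sum_congr rfl fun i _ => Finset.sum_congr rfl fun j _ => this i j]
    exact hMsum
  · -- the state equality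
    ext x y
    obtain ⟨a, b⟩ := x
    obtain ⟨c, e⟩ := y
    rw [rhoDS_apply]
    simp only [Matrix.sum_apply, Matrix.smul_apply, Matrix.kroneckerMap_apply,
      Matrix.vecMulVec_apply, Pi.star_apply, RCLike.star_def, smul_eq_mul]
    rw [show (∑ m' : Fin (Fintype.card T),
        ((((∑ i', B i' (E.symm m').1) ^ 2 / 4 ^ d : ℝ)) : ℂ) *
        ((wvec hd B (E.symm m').1 (E.symm m').2 a *
            (starRingEnd ℂ) (wvec hd B (E.symm m').1 (E.symm m').2 c)) *
         (wvec hd B (E.symm m').1 (E.symm m').2 b *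
            (starRingEnd ℂ) (wvec hd B (E.symm m').1 (E.symm m').2 e))))
        = ∑ t : T, ((((∑ i', B i' t.1) ^ 2 / 4 ^ d : ℝ)) : ℂ) *
        ((wvec hd B t.1 t.2 a * (starRingEnd ℂ) (wvec hd B t.1 t.2 c)) *
         (wvec hd B t.1 t.2 b * (starRingEnd ℂ) (wvec hd B t.1 t.2 e)))
      from Equiv.sum_comp E.symm (fun t : T =>
        ((((∑ i', B i' t.1) ^ 2 / 4 ^ d : ℝ)) : ℂ) *
        ((wvec hd B t.1 t.2 a * (starRingEnd ℂ) (wvec hd B t.1 t.2 c)) *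
         (wvec hd B t.1 t.2 b * (starRingEnd ℂ) (wvec hd B t.1 t.2 e))))]
    rw [Fintype.sum_prod_type]
    rw [Finset.sum_congr rfl fun m _ => wvec_sum hd B hB0 a b c e m]
    rw [Finset.sum_ite_irrel, Finset.sum_const_zero]
    congr 1
    rw [← Complex.ofReal_sum, Complex.ofReal_inj, hM, Matrix.mul_apply]
    simp [Matrix.transpose_apply]

/-- A diagonal symmetric state is separable if and only if its associated matrix
`M_d(ρ_DS)` is completely positive. -/
theorem rhoDS_separable_iff_Mds_completelyPositive {d : ℕ}
    (p : Fin d → Fin d → ℝ)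
    (hp0 : ∀ i j : Fin d, i ≤ j → 0 ≤ p i j)
    (hp1 : ∑ i : Fin d, ∑ j : Fin d, (if i ≤ j then p i j else 0) = 1) :
    Separable (rhoDS p) ↔ CompletelyPositiveMatrix (Mds p) := by
  have hd : 0 < d := by
    rcases Nat.eq_zero_or_pos d with rfl | hd
    · exfalso; simpa using hp1
    · exact hd
  have hMsum : ∑ i : Fin d, ∑ j : Fin d, Mds p i j = 1 := by
    rw [Mds_sum_eq]; exact hp1
  constructor
  · rintro ⟨n, lam, σ, τ, h0, h1, hσ, hτ, hρ⟩
    refine forward_dir p n lam σ τ h0 hσ hτ ?_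
    intro a b c e
    rw [← rhoDS_apply, hρ]
    simp only [Matrix.sum_apply, Matrix.smul_apply, Matrix.kroneckerMap_apply, smul_eq_mul]
  · rintro ⟨k, B, hB0, hM⟩
    exact reverse_dir hd p hMsum k B hB0 hM
end
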